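/- Let Z be a C-Bourgain-Delbaen-ℒ∞ sum of a sequence of Banach spaces (X_n) with extension operators (i_n) and restriction maps (r_n). Then the maps P_n = i_n r_n restricted to Z define bounded projections on Z with ‖P_n‖ ≤ C and P_m P_n = P_{min{m,n}} for all m, n, and the subspaces Z_n = i_n((X_n ⊕ ℓ∞(Δ_n))_∞) form a Schauder decomposition of Z with associated projections (P_n). -/
import Mathlib


open Filter Topology ENNReal

set_option maxHeartbeats 1000000

/-- For a `C`-Bourgain-Delbaen-`ℒ∞` sum `Z` of Banach spaces `(X n)` inside
`W = (⊕_n (X_n ⊕ ℓ∞(Δ_n))_∞)_∞`, with extension operators `i n` (defined on `W_n`, encoded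
via the restriction projections `ρ n`), the maps `P n = i n ∘ ρ n` restricted to `Z` are
bounded projections with `‖P n z‖ ≤ C ‖z‖`, `P m P n = P (min m n)` on `Z`, they converge
pointwise to the identity on `Z`, and the differences of successive projections take values
in the summands `Z_n = i n ((X_n ⊕ ℓ∞(Δ_n))_∞)`; i.e. `(Z_n)` is a Schauder decomposition
of `Z` with associated projections `(P n)`. -/
theorem stmt10 (X : ℕ → Type*) [∀ n, NormedAddCommGroup (X n)] [∀ n, NormedSpace ℂ (X n)]
    [∀ n, CompleteSpace (X n)]
    (Δ : ℕ → Type*) [∀ n, Fintype (Δ n)]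
    (C : ℝ) (hC : 1 ≤ C)
    (ρ : ℕ → lp (fun n => X n × (Δ n → ℂ)) ∞ →L[ℂ] lp (fun n => X n × (Δ n → ℂ)) ∞)
    (hρ : ∀ n (w : lp (fun n => X n × (Δ n → ℂ)) ∞) k,
      (ρ n w) k = if k ≤ n then w k else 0)
    (i : ℕ → lp (fun n => X n × (Δ n → ℂ)) ∞ →L[ℂ] lp (fun n => X n × (Δ n → ℂ)) ∞)
    (hiC : ∀ n, ‖i n‖ ≤ C)
    (hloc : ∀ n, (i n).comp (ρ n) = i n)
    (hright : ∀ n w, ρ n (i n w) = ρ n w)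
    (hγ : ∀ m n, m ≤ n → (i n).comp ((ρ n).comp (i m)) = i m)
    (hδ : ∀ m n, m < n → ∀ w, ((i m w) n).1 = 0)
    (Zn : ℕ → Set (lp (fun n => X n × (Δ n → ℂ)) ∞))
    (hZn : ∀ n, Zn n = i n '' {w | ∀ k, k ≠ n → w k = 0})
    (Z : Set (lp (fun n => X n × (Δ n → ℂ)) ∞))
    (hZ : Z = ((Submodule.span ℂ (⋃ n, Zn n)).topologicalClosure :
      Submodule ℂ (lp (fun n => X n × (Δ n → ℂ)) ∞))) :
    (∀ n, ∀ z ∈ Z, i n (ρ n z) ∈ Z) ∧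
    (∀ n z, ‖i n (ρ n z)‖ ≤ C * ‖z‖) ∧
    (∀ m n, ∀ z ∈ Z, i m (ρ m (i n (ρ n z))) = i (min m n) (ρ (min m n) z)) ∧
    (∀ z ∈ Z, Tendsto (fun n => i n (ρ n z)) atTop (𝓝 z)) ∧
    (∀ z ∈ Z, i 0 (ρ 0 z) ∈ Zn 0) ∧
    (∀ z ∈ Z, ∀ n, i (n + 1) (ρ (n + 1) z) - i n (ρ n z) ∈ Zn (n + 1)) := by
  classical
  have hC0 : (0:ℝ) ≤ C := zero_le_one.trans hC
  -- norm of ρ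
  have hρnorm : ∀ n z, ‖ρ n z‖ ≤ ‖z‖ := by
    intro n z
    refine lp.norm_le_of_forall_le (norm_nonneg z) fun k => ?_
    rw [hρ]
    split
    · exact lp.norm_apply_le_norm ENNReal.top_ne_zero z k
    · simp
  -- ρ m ∘ ρ n = ρ m for m ≤ n
  have hρρ : ∀ m n, m ≤ n → ∀ w, ρ m (ρ n w) = ρ m w := by
    intro m n hmn w
    apply lp.ext
    funext k
    rw [hρ, hρ, hρ]
    by_cases hk : k ≤ m
    · rw [if_pos hk, if_pos hk, if_pos (hk.trans hmn)]
    · rw [if_neg hk, if_neg hk]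
  -- ρ m (i n w) = ρ m w for m ≤ n
  have hρi : ∀ m n, m ≤ n → ∀ w, ρ m (i n w) = ρ m w := by
    intro m n hmn w
    rw [← hρρ m n hmn (i n w), hright, hρρ m n hmn]
  -- P n fixes elements of Zn k for k ≤ n
  have hfix : ∀ k n, k ≤ n → ∀ w, i n (ρ n (i k w)) = i k w := by
    intro k n hkn w
    exact DFunLike.congr_fun (hγ k n hkn) w
  -- P n kills elements of Zn k for k > n
  have hkill : ∀ k n, n < k → ∀ w, (∀ j, j ≠ k → w j = 0) →
      i n (ρ n (i k w)) = 0 := by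
    intro k n hnk w hw
    have h1 : ρ n (i k w) = 0 := by
      rw [hρi n k hnk.le]
      apply lp.ext
      funext j
      rw [hρ]
      split
      · exact hw j (by omega)
      · rfl
    rw [h1, map_zero]
  -- P n maps generators into the span
  set S : Submodule ℂ _ := Submodule.span ℂ (⋃ n, Zn n) with hS
  have hPS : ∀ n, ∀ y ∈ S, i n (ρ n y) ∈ S := by
    intro n y hy
    induction hy using Submodule.span_induction with
    | mem x hx =>
      obtain ⟨k, hk⟩ := Set.mem_iUnion.1 hx
      rw [hZn k] at hk
      obtain ⟨w, hw, rfl⟩ := hk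
      rcases le_or_gt k n with hkn | hnk
      · rw [hfix k n hkn]
        exact Submodule.subset_span hx
      · rw [hkill k n hnk w hw]
        exact Submodule.zero_mem S
    | zero => simp
    | add x y hx hy hx' hy' => rw [map_add, map_add]; exact Submodule.add_mem S hx' hy'
    | smul a x hx hx' => rw [map_smul, map_smul]; exact Submodule.smul_mem S a hx'
  have hZclosure : Z = closure (S : Set _) := by
    rw [hZ]; rfl
  -- (1) P n maps Z into Z
  have h1 : ∀ n, ∀ z ∈ Z, i n (ρ n z) ∈ Z := by
    intro n z hz
    rw [hZclosure] at hz ⊢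
    have := map_mem_closure (f := fun y => i n (ρ n y)) (s := (S : Set _)) (t := (S : Set _))
      (by exact (i n).continuous.comp (ρ n).continuous) hz (fun y hy => hPS n y hy)
    exact this
  -- (2) norm estimate
  have h2 : ∀ n z, ‖i n (ρ n z)‖ ≤ C * ‖z‖ := by
    intro n z
    calc ‖i n (ρ n z)‖ ≤ ‖i n‖ * ‖ρ n z‖ := (i n).le_opNorm _
    _ ≤ C * ‖z‖ := mul_le_mul (hiC n) (hρnorm n z) (norm_nonneg _) hC0
  -- (3) P m P n = P (min m n)
  have h3 : ∀ m n z, i m (ρ m (i n (ρ n z))) = i (min m n) (ρ (min m n) z) := by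
    intro m n z
    rcases le_total m n with hmn | hnm
    · rw [min_eq_left hmn, hρi m n hmn, hρρ m n hmn]
    · rw [min_eq_right hnm]
      exact DFunLike.congr_fun (hγ n m hnm) (ρ n z)
  -- eventually fixed on S
  have hev : ∀ y ∈ S, ∃ N, ∀ n ≥ N, i n (ρ n y) = y := by
    intro y hy
    induction hy using Submodule.span_induction with
    | mem x hx =>
      obtain ⟨k, hk⟩ := Set.mem_iUnion.1 hx
      rw [hZn k] at hk
      obtain ⟨w, hw, rfl⟩ := hk
      exact ⟨k, fun n hn => hfix k n hn w⟩
    | zero => exact ⟨0, fun n _ => by simp⟩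
    | add x y hx hy hx' hy' =>
      obtain ⟨N1, h1'⟩ := hx'
      obtain ⟨N2, h2'⟩ := hy'
      exact ⟨max N1 N2, fun n hn => by
        rw [map_add, map_add, h1' n (le_trans (le_max_left _ _) hn),
          h2' n (le_trans (le_max_right _ _) hn)]⟩
    | smul a x hx hx' =>
      obtain ⟨N, hN⟩ := hx'
      exact ⟨N, fun n hn => by rw [map_smul, map_smul, hN n hn]⟩
  -- (4) pointwise convergence
  have h4 : ∀ z ∈ Z, Tendsto (fun n => i n (ρ n z)) atTop (𝓝 z) := by
    intro z hz
    rw [Metric.tendsto_atTop]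
    intro ε hε
    have hC1 : (0:ℝ) < C + 1 := by linarith
    have hCε : 0 < ε / (C + 1) := div_pos hε hC1
    rw [hZclosure] at hz
    obtain ⟨y, hyS, hdy⟩ := Metric.mem_closure_iff.1 hz _ hCε
    obtain ⟨N, hN⟩ := hev y hyS
    refine ⟨N, fun n hn => ?_⟩
    rw [dist_eq_norm]
    have hPy : i n (ρ n z) - y = i n (ρ n (z - y)) := by
      rw [map_sub, map_sub, hN n hn]
    have heq : i n (ρ n z) - z = i n (ρ n (z - y)) + (y - z) := by
      rw [← hPy, sub_add_sub_cancel]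
    rw [heq]
    have hb1 : ‖i n (ρ n (z - y)) + (y - z)‖ ≤ ‖i n (ρ n (z - y))‖ + ‖y - z‖ :=
      norm_add_le _ _
    have hb2 : ‖i n (ρ n (z - y))‖ ≤ C * ‖z - y‖ := h2 n (z - y)
    have hb3 : ‖y - z‖ = ‖z - y‖ := norm_sub_rev _ _
    have hd : ‖z - y‖ * (C + 1) < ε := by
      rw [← dist_eq_norm] at *
      exact (lt_div_iff₀ hC1).1 hdy
    nlinarith [norm_nonneg (z - y)]
  -- (5)
  have h5 : ∀ z, i 0 (ρ 0 z) ∈ Zn 0 := by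
    intro z
    rw [hZn 0]
    refine ⟨ρ 0 z, fun k hk => ?_, rfl⟩
    rw [hρ, if_neg (by omega)]
  -- (6)
  have h6 : ∀ z (n : ℕ), i (n + 1) (ρ (n + 1) z) - i n (ρ n z) ∈ Zn (n + 1) := by
    intro z n
    rw [hZn (n + 1)]
    have key : i n (ρ n z) = i (n + 1) (ρ (n + 1) (i n (ρ n z))) :=
      (DFunLike.congr_fun (hγ n (n + 1) (Nat.le_succ n)) (ρ n z)).symm
    refine ⟨ρ (n + 1) z - ρ (n + 1) (i n (ρ n z)), fun k hk => ?_, ?_⟩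
    · have hsub : (ρ (n+1) z - ρ (n+1) (i n (ρ n z))) k
          = (ρ (n+1) z) k - (ρ (n+1) (i n (ρ n z))) k := by
        rw [lp.coeFn_sub, Pi.sub_apply]
      rw [hsub, hρ, hρ]
      rcases le_or_gt k (n + 1) with hkn | hkn
      · have hkn' : k ≤ n := by omega
        rw [if_pos hkn, if_pos hkn]
        have hcoord : (i n (ρ n z)) k = z k := by
          have h' : (ρ n (i n (ρ n z))) k = (ρ n (ρ n z)) k := by
            rw [hright n (ρ n z)]
          rw [hρ, hρ, hρ, if_pos hkn', if_pos hkn', if_pos hkn'] at h'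
          exact h'
        rw [hcoord, sub_self]
      · rw [if_neg (by omega), if_neg (by omega), sub_self]
    · rw [map_sub, ← key]
  exact ⟨h1, h2, fun m n z _ => h3 m n z, h4, fun z _ => h5 z, fun z _ n => h6 z n⟩
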